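/- Let Λ ⊂ Z^d be finite and for p ∈ R^d define ν̄(ρ,Λ,p) as the infimum over v ∈ ℓ_{p,Λ⁺} + F_0(Λ⁻) of (1/(2χ(ρ)|Λ|)) Σ_{b ∈ Λ̄*} E_ρ[(1/2) c_b (π_b v)²], where 1 ≤ c_b ≤ λ, χ(ρ) = ρ(1−ρ), ℓ_{p,Λ⁺}(η) = Σ_{x∈Λ⁺}(p·x)η_x, F_0(Λ⁻) is the set of functions depending only on interior coordinates, and Λ̄* = {{x, x+e_i} : x ∈ Λ, 1 ≤ i ≤ d}. Then ν̄ is a quadratic form in p: there exists a symmetric positive matrix D̄(ρ,Λ) with Id ≤ D̄(ρ,Λ) ≤ λ·Id such that ν̄(ρ,Λ,p) = (1/2) p · D̄(ρ,Λ) p for all p. -/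

import Mathlib

open MeasureTheory

/-- `μ` is the Bernoulli(ρ) product measure on `{0,1}^{ℤᵈ}`. -/
def IsBernoulliProduct {d : ℕ} (ρ : ℝ) (μ : Measure ((Fin d → ℤ) → Bool)) : Prop :=
  IsProbabilityMeasure μ ∧
    ∀ (s : Finset (Fin d → ℤ)) (b : (Fin d → ℤ) → Bool),
      μ {η | ∀ x ∈ s, η x = b x} = ∏ x ∈ s, ENNReal.ofReal (if b x then ρ else 1 - ρ)

/-- The `i`-th coordinate unit vector of `ℤᵈ`. -/
def unitVec (d : ℕ) (i : Fin d) : Fin d → ℤ := fun j => if j = i then 1 else 0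

/-- The interior `Λ⁻ = Λ \ ∂Λ`. -/
def interiorF {d : ℕ} (Λ : Finset (Fin d → ℤ)) : Finset (Fin d → ℤ) :=
  Λ.filter fun x => ∀ i : Fin d, x + unitVec d i ∈ Λ ∧ x - unitVec d i ∈ Λ

/-- The enlarged set `Λ⁺ = Λ ∪ ⋃_{i=1}^d (Λ + e_i)`. -/
def plusF {d : ℕ} (Λ : Finset (Fin d → ℤ)) : Finset (Fin d → ℤ) :=
  Λ ∪ Finset.univ.biUnion fun i : Fin d => Λ.image (· + unitVec d i)

/-- The exchange `η^{x,y}`. -/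
def exchange {d : ℕ} (x y : Fin d → ℤ) (η : (Fin d → ℤ) → Bool) : (Fin d → ℤ) → Bool :=
  fun z => if z = x then η y else if z = y then η x else η z

/-- The affine function `ℓ_{p,Λ⁺}(η) = Σ_{x∈Λ⁺} (p·x) η_x`. -/
def affineFn {d : ℕ} (Λplus : Finset (Fin d → ℤ)) (p : Fin d → ℝ) :
    ((Fin d → ℤ) → Bool) → ℝ :=
  fun η => ∑ x ∈ Λplus, (∑ i, p i * (x i : ℝ)) * (if η x then (1 : ℝ) else 0)

/-- The normalized Dirichlet energy
`(1/(2χ(ρ)|Λ|)) Σ_{b∈Λ̄*} E_ρ[(1/2) c_b (π_b v)²]`, where the enlarged bond set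
`Λ̄* = {{x, x+e_i} : x ∈ Λ, 1 ≤ i ≤ d}` is indexed by pairs `(x, i)` with `x ∈ Λ`. -/
noncomputable def dirichletEnergy {d : ℕ} (ρ : ℝ) (μ : Measure ((Fin d → ℤ) → Bool))
    (c : (Fin d → ℤ) → Fin d → ((Fin d → ℤ) → Bool) → ℝ)
    (Λ : Finset (Fin d → ℤ)) (v : ((Fin d → ℤ) → Bool) → ℝ) : ℝ :=
  (1 / (2 * (ρ * (1 - ρ)) * (Λ.card : ℝ))) *
    ∑ x ∈ Λ, ∑ i : Fin d,
      ∫ η, (1 / 2) * c x i η * (v (exchange x (x + unitVec d i) η) - v η) ^ 2 ∂μ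

/-- The finite-volume quantity
`ν̄(ρ,Λ,p) = inf_{v ∈ ℓ_{p,Λ⁺} + F₀(Λ⁻)} (1/(2χ(ρ)|Λ|)) Σ_{b∈Λ̄*} E_ρ[(1/2)c_b(π_b v)²]`. -/
noncomputable def nubar {d : ℕ} (ρ : ℝ) (μ : Measure ((Fin d → ℤ) → Bool))
    (c : (Fin d → ℤ) → Fin d → ((Fin d → ℤ) → Bool) → ℝ)
    (Λ : Finset (Fin d → ℤ)) (p : Fin d → ℝ) : ℝ :=
  sInf {r : ℝ | ∃ g : ((Fin d → ℤ) → Bool) → ℝ,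
    (∀ η η', (∀ x ∈ interiorF Λ, η x = η' x) → g η = g η') ∧
    r = dirichletEnergy ρ μ c Λ (fun η => affineFn (plusF Λ) p η + g η)}


namespace NubarAux


variable {d : ℕ}

abbrev Cfg (d : ℕ) := (Fin d → ℤ) → Bool

/-- `g` depends only on the coordinates in `s`. -/
def DepOn (g : Cfg d → ℝ) (s : Finset (Fin d → ℤ)) : Prop :=
  ∀ η η' : Cfg d, (∀ x ∈ s, η x = η' x) → g η = g η'

lemma DepOn.mono {g : Cfg d → ℝ} {s t : Finset (Fin d → ℤ)} (hst : s ⊆ t)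
    (hg : DepOn g s) : DepOn g t :=
  fun η η' h => hg η η' (fun x hx => h x (hst hx))

def extb (s : Finset (Fin d → ℤ)) (b : {x // x ∈ s} → Bool) : Cfg d :=
  fun z => if h : z ∈ s then b ⟨z, h⟩ else false

def restr (s : Finset (Fin d → ℤ)) (η : Cfg d) : {x // x ∈ s} → Bool := fun z => η z

@[simp] lemma extb_mem {s : Finset (Fin d → ℤ)} (b : {x // x ∈ s} → Bool) {z : Fin d → ℤ}
    (hz : z ∈ s) : extb s b z = b ⟨z, hz⟩ := dif_pos hz

lemma extb_restr {g : Cfg d → ℝ} {s : Finset (Fin d → ℤ)} (hg : DepOn g s) (η : Cfg d) :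
    g (extb s (restr s η)) = g η :=
  hg _ _ (fun x hx => by simp [extb, restr, hx])

lemma rep {g : Cfg d → ℝ} {s : Finset (Fin d → ℤ)} (hg : DepOn g s) (η : Cfg d) :
    g η = ∑ b : {x // x ∈ s} → Bool,
      (if restr s η = b then (1:ℝ) else 0) * g (extb s b) := by
  rw [Finset.sum_eq_single (restr s η)]
  · rw [if_pos rfl, one_mul, extb_restr hg]
  · intro b _ hb
    rw [if_neg (fun h => hb h.symm), zero_mul]
  · intro h; exact absurd (Finset.mem_univ _) h

lemma measurable_restr (s : Finset (Fin d → ℤ)) : Measurable (restr (d := d) s) :=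
  measurable_pi_lambda _ (fun z => measurable_pi_apply _)

lemma DepOn.measurable {g : Cfg d → ℝ} {s : Finset (Fin d → ℤ)} (hg : DepOn g s) :
    Measurable g := by
  have h : g = fun η => ∑ b : {x // x ∈ s} → Bool,
      (if restr s η = b then (1:ℝ) else 0) * g (extb s b) := funext (rep hg)
  rw [h]
  refine Finset.measurable_sum _ fun b _ => Measurable.mul_const ?_ _
  exact Measurable.ite (measurable_restr s (MeasurableSet.singleton b))
    measurable_const measurable_const

lemma DepOn.bounded {g : Cfg d → ℝ} {s : Finset (Fin d → ℤ)} (hg : DepOn g s) :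
    ∃ C : ℝ, ∀ η, |g η| ≤ C := by
  refine ⟨∑ b : {x // x ∈ s} → Bool, |g (extb s b)|, fun η => ?_⟩
  rw [rep hg η]
  refine (Finset.abs_sum_le_sum_abs _ _).trans (Finset.sum_le_sum fun b _ => ?_)
  rw [abs_mul]
  rcases le_or_gt (|g (extb s b)|) 0 with h | h
  · have : |g (extb s b)| = 0 := le_antisymm h (abs_nonneg _)
    simp [this]
  · calc |if restr s η = b then (1:ℝ) else 0| * |g (extb s b)|
        ≤ 1 * |g (extb s b)| := by
          refine mul_le_mul_of_nonneg_right ?_ (abs_nonneg _)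
          split <;> simp
    _ = _ := one_mul _

lemma integrable_of_bdd {μ : Measure (Cfg d)} [IsProbabilityMeasure μ]
    {f : Cfg d → ℝ} (hf : Measurable f) {C : ℝ} (hC : ∀ η, |f η| ≤ C) :
    Integrable f μ :=
  Integrable.mono' (integrable_const C) hf.aestronglyMeasurable
    (Filter.Eventually.of_forall fun η => by simpa [Real.norm_eq_abs] using hC η)

lemma DepOn.integrable {μ : Measure (Cfg d)} [IsProbabilityMeasure μ]
    {g : Cfg d → ℝ} {s : Finset (Fin d → ℤ)} (hg : DepOn g s) : Integrable g μ := by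
  obtain ⟨C, hC⟩ := hg.bounded
  exact integrable_of_bdd hg.measurable hC

noncomputable def cylW (ρ : ℝ) (s : Finset (Fin d → ℤ)) (b : {x // x ∈ s} → Bool) : ℝ :=
  ∏ z : {x // x ∈ s}, (if b z then ρ else 1 - ρ)

lemma cylW_nonneg {ρ : ℝ} (h0 : 0 ≤ ρ) (h1 : ρ ≤ 1) (s : Finset (Fin d → ℤ))
    (b : {x // x ∈ s} → Bool) : 0 ≤ cylW ρ s b :=
  Finset.prod_nonneg fun z _ => by split <;> [exact h0; linarith]

/-- Master formula: the integral of a local function is a finite weighted sum. -/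
lemma integral_depOn {ρ : ℝ} (h0 : 0 ≤ ρ) (h1 : ρ ≤ 1) {μ : Measure (Cfg d)}
    (hμ : IsBernoulliProduct ρ μ) {g : Cfg d → ℝ} {s : Finset (Fin d → ℤ)}
    (hg : DepOn g s) :
    ∫ η, g η ∂μ = ∑ b : {x // x ∈ s} → Bool, cylW ρ s b * g (extb s b) := by
  have hP : IsProbabilityMeasure μ := hμ.1
  have hmeas : ∀ b : {x // x ∈ s} → Bool, MeasurableSet {η : Cfg d | restr s η = b} :=
    fun b => measurable_restr s (MeasurableSet.singleton b)
  calc ∫ η, g η ∂μ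
      = ∫ η, ∑ b : {x // x ∈ s} → Bool,
          (if restr s η = b then (1:ℝ) else 0) * g (extb s b) ∂μ :=
        integral_congr_ae (Filter.Eventually.of_forall (rep hg))
    _ = ∑ b : {x // x ∈ s} → Bool,
          ∫ η, (if restr s η = b then (1:ℝ) else 0) * g (extb s b) ∂μ := by
        refine integral_finset_sum _ fun b _ => ?_
        refine integrable_of_bdd (Measurable.mul_const
          (Measurable.ite (hmeas b) measurable_const measurable_const) _)
          (C := |g (extb s b)|) fun η => ?_
        rw [abs_mul]
        rcases eq_or_ne (restr s η) b with h | h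
        · simp [h]
        · simp [h, abs_nonneg]
    _ = ∑ b : {x // x ∈ s} → Bool, (μ {η | restr s η = b}).toReal * g (extb s b) := by
        refine Finset.sum_congr rfl fun b _ => ?_
        have h1' : (fun η => (if restr s η = b then (1:ℝ) else 0) * g (extb s b))
            = fun η => Set.indicator {η : Cfg d | restr s η = b}
              (fun _ => g (extb s b)) η := by
          funext η
          rw [Set.indicator_apply]
          by_cases h : restr s η = b <;> simp [h]
        rw [h1', integral_indicator_const _ (hmeas b), smul_eq_mul, Measure.real]
    _ = ∑ b : {x // x ∈ s} → Bool, cylW ρ s b * g (extb s b) := by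
        refine Finset.sum_congr rfl fun b _ => ?_
        congr 1
        have hset : {η : Cfg d | restr s η = b} = {η : Cfg d | ∀ x ∈ s, η x = extb s b x} := by
          ext η
          simp only [Set.mem_setOf_eq, funext_iff, restr]
          constructor
          · intro h x hx; rw [extb_mem b hx]; exact h ⟨x, hx⟩
          · intro h z; rw [← extb_mem b z.2]; exact h z z.2
        rw [hset, hμ.2 s (extb s b)]
        rw [ENNReal.toReal_prod]
        unfold cylW
        rw [← Finset.prod_attach s (fun x => ENNReal.toReal (ENNReal.ofReal
          (if extb s b x then ρ else 1 - ρ)))]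
        rw [Finset.univ_eq_attach]
        refine Finset.prod_congr rfl fun z _ => ?_
        rw [extb_mem b z.2, ENNReal.toReal_ofReal (by split <;> [exact h0; linarith])]


section Part2
variable {ρ : ℝ} {μ : Measure (Cfg d)}

/-- Independence: integrating a local function against a site outside its support. -/
lemma integral_mul_site (h0 : 0 ≤ ρ) (h1 : ρ ≤ 1) (hμ : IsBernoulliProduct ρ μ)
    {g : Cfg d → ℝ} {s : Finset (Fin d → ℤ)} (hg : DepOn g s) {z : Fin d → ℤ}
    (hz : z ∉ s) :
    ∫ η, g η * (if η z then (1:ℝ) else 0) ∂μ = ρ * ∫ η, g η ∂μ := by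
  classical
  set s' : Finset (Fin d → ℤ) := insert z s with hs'
  have hzs' : z ∈ s' := Finset.mem_insert_self z s
  set i₀ : {x // x ∈ s'} := ⟨z, hzs'⟩ with hi₀
  have hgs' : DepOn g s' := hg.mono (Finset.subset_insert z s)
  have hG : DepOn (fun η => g η * (if η z then (1:ℝ) else 0)) s' := by
    intro η η' h
    dsimp only
    rw [hgs' η η' h, h z hzs']
  rw [integral_depOn h0 h1 hμ hG, integral_depOn h0 h1 hμ hgs']
  set e := Equiv.funSplitAt i₀ Bool with he
  have happ : ∀ (v : Bool) (r : {j : {x // x ∈ s'} // j ≠ i₀} → Bool) (j : {x // x ∈ s'}),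
      e.symm (v, r) j = if h : j = i₀ then v else r ⟨j, h⟩ := by
    intro v r j
    by_cases h : j = i₀
    · subst h; simp [he, Equiv.funSplitAt, Equiv.piSplitAt]
    · simp [he, Equiv.funSplitAt, Equiv.piSplitAt, h]
  have hW : ∀ (v : Bool) (r : {j : {x // x ∈ s'} // j ≠ i₀} → Bool),
      cylW ρ s' (e.symm (v, r)) = (if v then ρ else 1 - ρ) *
        ∏ j : {j : {x // x ∈ s'} // j ≠ i₀}, (if r j then ρ else 1 - ρ) := by
    intro v r
    unfold cylW
    rw [← Finset.mul_prod_erase Finset.univ _ (Finset.mem_univ i₀)]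
    congr 1
    · rw [happ v r i₀, dif_pos rfl]
    · rw [Finset.prod_subtype (Finset.univ.erase i₀)
        (p := fun j : {x // x ∈ s'} => j ≠ i₀) (by simp)]
      refine Finset.prod_congr rfl fun j _ => ?_
      rw [happ v r j, dif_neg j.2]
  have hval : ∀ (v : Bool) (r : {j : {x // x ∈ s'} // j ≠ i₀} → Bool),
      g (extb s' (e.symm (v, r))) = g (extb s' (e.symm (true, r))) := by
    intro v r
    refine hg _ _ fun x hx => ?_
    have hxs' : x ∈ s' := Finset.mem_insert_of_mem hx
    have hne : (⟨x, hxs'⟩ : {x // x ∈ s'}) ≠ i₀ := by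
      intro h
      exact hz (by rwa [← show x = z from congrArg Subtype.val h])
    rw [extb_mem _ hxs', extb_mem _ hxs', happ, happ, dif_neg hne, dif_neg hne]
  have hind : ∀ (v : Bool) (r : {j : {x // x ∈ s'} // j ≠ i₀} → Bool),
      extb s' (e.symm (v, r)) z = v := by
    intro v r
    rw [extb_mem _ hzs', happ, dif_pos rfl]
  rw [← Equiv.sum_comp e.symm (fun b => cylW ρ s' b * (g (extb s' b) *
      (if (extb s' b) z then (1:ℝ) else 0)))]
  rw [← Equiv.sum_comp e.symm (fun b => cylW ρ s' b * g (extb s' b))]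
  rw [Fintype.sum_prod_type, Fintype.sum_prod_type]
  rw [Fintype.sum_bool, Fintype.sum_bool]
  simp only [hW, hval, hind]
  rw [← Finset.sum_add_distrib, mul_add, Finset.mul_sum, Finset.mul_sum,
    ← Finset.sum_add_distrib]
  refine Finset.sum_congr rfl fun r _ => ?_
  simp only [if_true, Bool.false_eq_true, if_false]
  ring

lemma exchange_extb {s : Finset (Fin d → ℤ)} {x y : Fin d → ℤ} (hx : x ∈ s) (hy : y ∈ s)
    (b : {x // x ∈ s} → Bool) :
    exchange x y (extb s b) = extb s (b ∘ (Equiv.swap ⟨x, hx⟩ ⟨y, hy⟩)) := by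
  funext z
  unfold exchange
  by_cases hzx : z = x
  · subst hzx
    rw [if_pos rfl, extb_mem _ hy, extb_mem _ hx]
    simp [Equiv.swap_apply_left]
  · by_cases hzy : z = y
    · subst hzy
      rw [if_neg hzx, if_pos rfl, extb_mem _ hx, extb_mem _ hy]
      simp [Equiv.swap_apply_right]
    · rw [if_neg hzx, if_neg hzy]
      by_cases hzs : z ∈ s
      · rw [extb_mem _ hzs, extb_mem _ hzs]
        have h1 : (⟨z, hzs⟩ : {x // x ∈ s}) ≠ ⟨x, hx⟩ := fun h => hzx (congrArg Subtype.val h)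
        have h2 : (⟨z, hzs⟩ : {x // x ∈ s}) ≠ ⟨y, hy⟩ := fun h => hzy (congrArg Subtype.val h)
        simp [Equiv.swap_apply_of_ne_of_ne h1 h2]
      · unfold extb
        rw [dif_neg hzs, dif_neg hzs]

/-- Exchange invariance of the Bernoulli measure (for local functions). -/
lemma integral_comp_exchange (h0 : 0 ≤ ρ) (h1 : ρ ≤ 1) (hμ : IsBernoulliProduct ρ μ)
    {f : Cfg d → ℝ} {s : Finset (Fin d → ℤ)} (hf : DepOn f s) {x y : Fin d → ℤ}
    (hx : x ∈ s) (hy : y ∈ s) :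
    ∫ η, f (exchange x y η) ∂μ = ∫ η, f η ∂μ := by
  have hfs : DepOn (fun η => f (exchange x y η)) s := by
    intro η η' h
    dsimp only
    refine hf _ _ fun w hw => ?_
    unfold exchange
    split_ifs
    · exact h y hy
    · exact h x hx
    · exact h w hw
  rw [integral_depOn h0 h1 hμ hfs, integral_depOn h0 h1 hμ hf]
  have hinv : Function.Involutive
      (fun b : {x // x ∈ s} → Bool => b ∘ (Equiv.swap ⟨x, hx⟩ ⟨y, hy⟩)) := by
    intro b; funext j; simp [Function.comp, Equiv.swap_apply_self]
  refine Fintype.sum_bijective _ hinv.bijective _ _ fun b => ?_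
  rw [exchange_extb hx hy]
  congr 1
  unfold cylW
  exact (Equiv.prod_comp (Equiv.swap ⟨x, hx⟩ ⟨y, hy⟩)
    (fun j => if b j then ρ else 1 - ρ)).symm

lemma depOn_site (z : Fin d → ℤ) :
    DepOn (fun η : Cfg d => if η z then (1:ℝ) else 0) {z} := by
  intro η η' h
  dsimp only
  rw [h z (Finset.mem_singleton_self z)]

lemma integral_site (h0 : 0 ≤ ρ) (h1 : ρ ≤ 1) (hμ : IsBernoulliProduct ρ μ)
    (z : Fin d → ℤ) :
    ∫ η, (if η z then (1:ℝ) else 0) ∂μ = ρ := by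
  have hP : IsProbabilityMeasure μ := hμ.1
  have h := integral_mul_site h0 h1 hμ (g := fun _ => (1:ℝ)) (s := ∅)
    (fun _ _ _ => rfl) (Finset.notMem_empty z)
  simpa using h

lemma integral_site_mul_site (h0 : 0 ≤ ρ) (h1 : ρ ≤ 1) (hμ : IsBernoulliProduct ρ μ)
    {x y : Fin d → ℤ} (hxy : x ≠ y) :
    ∫ η, (if η x then (1:ℝ) else 0) * (if η y then (1:ℝ) else 0) ∂μ = ρ * ρ := by
  rw [integral_mul_site h0 h1 hμ (depOn_site x)
    (by simpa using fun h => hxy h.symm : y ∉ ({x} : Finset (Fin d → ℤ))),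
    integral_site h0 h1 hμ x]

end Part2

section Geometry
variable {Λ : Finset (Fin d → ℤ)}

lemma subset_plusF : Λ ⊆ plusF Λ := Finset.subset_union_left

lemma add_unitVec_mem_plusF {x : Fin d → ℤ} (hx : x ∈ Λ) (i : Fin d) :
    x + unitVec d i ∈ plusF Λ := by
  refine Finset.mem_union_right _ (Finset.mem_biUnion.2 ⟨i, Finset.mem_univ i, ?_⟩)
  exact Finset.mem_image.2 ⟨x, hx, rfl⟩

lemma interiorF_subset : interiorF Λ ⊆ Λ := Finset.filter_subset _ _

lemma ne_add_unitVec (x : Fin d → ℤ) (i : Fin d) : x ≠ x + unitVec d i := by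
  intro h
  have := congrFun h i
  simp [unitVec] at this

lemma interiorF_subset_image (i : Fin d) :
    interiorF Λ ⊆ Λ.image (· + unitVec d i) := by
  intro z hz
  rw [interiorF, Finset.mem_filter] at hz
  exact Finset.mem_image.2 ⟨z - unitVec d i, (hz.2 i).2, by ring⟩

lemma card_image_add (i : Fin d) : (Λ.image (· + unitVec d i)).card = Λ.card :=
  Finset.card_image_of_injective _ (add_left_injective _)

end Geometry

section Affine
variable {Λ : Finset (Fin d → ℤ)} {p q : Fin d → ℝ}

lemma depOn_affineFn (P : Finset (Fin d → ℤ)) (p : Fin d → ℝ) :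
    DepOn (affineFn P p) P := by
  intro η η' h
  exact Finset.sum_congr rfl fun x hx => by rw [h x hx]

lemma affineFn_add (P : Finset (Fin d → ℤ)) (p q : Fin d → ℝ) (η : Cfg d) :
    affineFn P (p + q) η = affineFn P p η + affineFn P q η := by
  unfold affineFn
  rw [← Finset.sum_add_distrib]
  refine Finset.sum_congr rfl fun x _ => ?_
  rw [← add_mul, ← Finset.sum_add_distrib]
  congr 1
  refine Finset.sum_congr rfl fun i _ => ?_
  simp [add_mul]

lemma affineFn_sub (P : Finset (Fin d → ℤ)) (p q : Fin d → ℝ) (η : Cfg d) :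
    affineFn P (p - q) η = affineFn P p η - affineFn P q η := by
  unfold affineFn
  rw [← Finset.sum_sub_distrib]
  refine Finset.sum_congr rfl fun x _ => ?_
  rw [← sub_mul, ← Finset.sum_sub_distrib]
  congr 1
  refine Finset.sum_congr rfl fun i _ => ?_
  simp [sub_mul]

lemma affineFn_smul (P : Finset (Fin d → ℤ)) (t : ℝ) (p : Fin d → ℝ) (η : Cfg d) :
    affineFn P (t • p) η = t * affineFn P p η := by
  unfold affineFn
  rw [Finset.mul_sum]
  refine Finset.sum_congr rfl fun x _ => ?_
  rw [← mul_assoc]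
  congr 1
  rw [Finset.mul_sum]
  refine Finset.sum_congr rfl fun i _ => ?_
  simp [mul_assoc]

lemma coef_diff (p : Fin d → ℝ) (x : Fin d → ℤ) (i : Fin d) :
    (∑ j, p j * (((x + unitVec d i) j : ℤ) : ℝ)) - ∑ j, p j * ((x j : ℤ) : ℝ) = p i := by
  rw [← Finset.sum_sub_distrib]
  have : ∀ j, p j * (((x + unitVec d i) j : ℤ) : ℝ) - p j * ((x j : ℤ) : ℝ)
      = if j = i then p j else 0 := by
    intro j
    have : ((x + unitVec d i) j : ℤ) = x j + (if j = i then 1 else 0) := by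
      simp [unitVec, Pi.add_apply]
    rw [this]
    push_cast
    split <;> ring
  simp_rw [this]
  simp

/-- The gradient of the affine function across a bond. -/
lemma affine_exchange (P : Finset (Fin d → ℤ)) (p : Fin d → ℝ) {x : Fin d → ℤ} {i : Fin d}
    (hx : x ∈ P) (hy : x + unitVec d i ∈ P) (η : Cfg d) :
    affineFn P p (exchange x (x + unitVec d i) η) - affineFn P p η
      = p i * ((if η x then (1:ℝ) else 0) - (if η (x + unitVec d i) then (1:ℝ) else 0)) := by
  set y := x + unitVec d i with hy'
  have hxy : x ≠ y := ne_add_unitVec x i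
  unfold affineFn
  rw [← Finset.sum_sub_distrib]
  have hsub : ({x, y} : Finset (Fin d → ℤ)) ⊆ P := by
    intro w hw
    rcases Finset.mem_insert.1 hw with h | h
    · subst h; exact hx
    · rw [Finset.mem_singleton] at h; subst h; exact hy
  rw [← Finset.sum_subset hsub (fun w _ hw => ?_)]
  · rw [Finset.sum_pair hxy]
    have hex_x : exchange x y η x = η y := if_pos rfl
    have hex_y : exchange x y η y = η x := by
      unfold exchange
      rw [if_neg (fun h => hxy h.symm), if_pos rfl]
    rw [hex_x, hex_y]
    have hc := coef_diff p x i
    set cx := ∑ j, p j * ((x j : ℤ) : ℝ)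
    set cy := ∑ j, p j * (((x + unitVec d i) j : ℤ) : ℝ)
    linear_combination ((if η x then (1:ℝ) else 0) - (if η y then (1:ℝ) else 0)) * hc
  · have hwx : w ≠ x := fun h => hw (by rw [h]; exact Finset.mem_insert_self _ _)
    have hwy : w ≠ y := fun h => hw (by rw [h]; exact Finset.mem_insert.2 (Or.inr (Finset.mem_singleton_self _)))
    have : exchange x y η w = η w := by
      unfold exchange
      rw [if_neg hwx, if_neg hwy]
    rw [this, sub_self]

end Affine

-- ### new material
lemma DepOn.add {f g : Cfg d → ℝ} {s : Finset (Fin d → ℤ)} (hf : DepOn f s)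
    (hg : DepOn g s) : DepOn (fun η => f η + g η) s :=
  fun η η' h => by dsimp only; rw [hf η η' h, hg η η' h]

lemma DepOn.mul {f g : Cfg d → ℝ} {s : Finset (Fin d → ℤ)} (hf : DepOn f s)
    (hg : DepOn g s) : DepOn (fun η => f η * g η) s :=
  fun η η' h => by dsimp only; rw [hf η η' h, hg η η' h]

lemma DepOn.outer {f : Cfg d → ℝ} {s : Finset (Fin d → ℤ)} (hf : DepOn f s)
    (φ : ℝ → ℝ) : DepOn (fun η => φ (f η)) s :=
  fun η η' h => congrArg φ (hf η η' h)

lemma DepOn.comp_exchange {f : Cfg d → ℝ} {s : Finset (Fin d → ℤ)} (hf : DepOn f s)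
    {x y : Fin d → ℤ} (hx : x ∈ s) (hy : y ∈ s) :
    DepOn (fun η => f (exchange x y η)) s := by
  intro η η' h
  dsimp only
  refine hf _ _ fun w hw => ?_
  unfold exchange
  split_ifs
  · exact h y hy
  · exact h x hx
  · exact h w hw

/-- Weighted Cauchy–Schwarz for finite sums. -/
lemma weighted_CS {ι : Type*} (s : Finset ι) (ω u w : ι → ℝ) (hω : ∀ k ∈ s, 0 ≤ ω k) :
    (∑ k ∈ s, ω k * (u k * w k))^2 ≤
      (∑ k ∈ s, ω k * u k ^ 2) * (∑ k ∈ s, ω k * w k ^ 2) := by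
  have h := Finset.sum_mul_sq_le_sq_mul_sq s (fun k => Real.sqrt (ω k) * u k)
    (fun k => Real.sqrt (ω k) * w k)
  have e1 : ∀ k ∈ s, (Real.sqrt (ω k) * u k) * (Real.sqrt (ω k) * w k)
      = ω k * (u k * w k) := by
    intro k hk
    have h' : Real.sqrt (ω k) * Real.sqrt (ω k) = ω k := Real.mul_self_sqrt (hω k hk)
    linear_combination (u k * w k) * h'
  have e2 : ∀ k ∈ s, (Real.sqrt (ω k) * u k) ^ 2 = ω k * u k ^ 2 := by
    intro k hk
    rw [mul_pow, Real.sq_sqrt (hω k hk)]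
  have e3 : ∀ k ∈ s, (Real.sqrt (ω k) * w k) ^ 2 = ω k * w k ^ 2 := by
    intro k hk
    rw [mul_pow, Real.sq_sqrt (hω k hk)]
  rw [Finset.sum_congr rfl e1, Finset.sum_congr rfl e2, Finset.sum_congr rfl e3] at h
  exact h

section Energy
variable {ρ lam : ℝ} {μ : Measure (Cfg d)}
  {c : (Fin d → ℤ) → Fin d → Cfg d → ℝ} {Λ : Finset (Fin d → ℤ)}

/-- discrete gradient across the bond `(x, x+e_i)` -/
def Dv (v : Cfg d → ℝ) (x : Fin d → ℤ) (i : Fin d) : Cfg d → ℝ :=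
  fun η => v (exchange x (x + unitVec d i) η) - v η

/-- site indicator as a real function -/
def site (z : Fin d → ℤ) : Cfg d → ℝ := fun η => if η z then (1:ℝ) else 0

lemma depOn_site' {s : Finset (Fin d → ℤ)} {z : Fin d → ℤ} (hz : z ∈ s) :
    DepOn (site z) s :=
  (depOn_site z).mono (Finset.singleton_subset_iff.2 hz)

lemma DepOn.dv {v : Cfg d → ℝ} (hv : DepOn v (plusF Λ)) {x : Fin d → ℤ} (hx : x ∈ Λ)
    (i : Fin d) : DepOn (Dv v x i) (plusF Λ) := by
  have h1 := hv.comp_exchange (subset_plusF hx) (add_unitVec_mem_plusF hx i)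
  intro η η' h
  unfold Dv
  have h2 : v (exchange x (x + unitVec d i) η) = v (exchange x (x + unitVec d i) η') :=
    h1 η η' h
  rw [h2, hv η η' h]

lemma dirichletEnergy_eq (v : Cfg d → ℝ) :
    dirichletEnergy ρ μ c Λ v = (1 / (2 * (ρ * (1 - ρ)) * (Λ.card : ℝ))) *
      ∑ x ∈ Λ, ∑ i : Fin d, ∫ η, (1 / 2) * c x i η * (Dv v x i η) ^ 2 ∂μ := rfl

lemma integral_sq_site_diff (h0 : 0 ≤ ρ) (h1 : ρ ≤ 1) (hμ : IsBernoulliProduct ρ μ)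
    {x y : Fin d → ℤ} (hxy : x ≠ y) :
    ∫ η, (site x η - site y η) ^ 2 ∂μ = 2 * (ρ * (1 - ρ)) := by
  haveI : IsProbabilityMeasure μ := hμ.1
  have hpt : ∀ η : Cfg d, (site x η - site y η) ^ 2
      = site x η + site y η - 2 * (site x η * site y η) := by
    intro η
    unfold site
    cases η x <;> cases η y <;> norm_num
  have hix : Integrable (site x) μ := (depOn_site x).integrable
  have hiy : Integrable (site y) μ := (depOn_site y).integrable
  have hixy : Integrable (fun η => site x η * site y η) μ :=
    ((depOn_site' (s := ({x, y} : Finset (Fin d → ℤ))) (by simp)).mul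
      (depOn_site' (by simp))).integrable
  rw [integral_congr_ae (Filter.Eventually.of_forall hpt)]
  have hixpy : Integrable (fun η => site x η + site y η) μ :=
    ((depOn_site' (s := ({x, y} : Finset (Fin d → ℤ))) (by simp)).add
      (depOn_site' (by simp))).integrable
  rw [integral_sub hixpy (hixy.const_mul 2), integral_add hix hiy,
    integral_const_mul 2 _]
  have hx' := integral_site h0 h1 hμ x
  have hy' := integral_site h0 h1 hμ y
  have hxy' := integral_site_mul_site h0 h1 hμ hxy
  unfold site
  rw [hx', hy', hxy']
  ring

lemma integrable_c_mul (hP : IsProbabilityMeasure μ) {x : Fin d → ℤ} {i : Fin d}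
    (hcm : Measurable (c x i)) {L : ℝ} (hcb : ∀ η, |c x i η| ≤ L)
    {q : Cfg d → ℝ} {s : Finset (Fin d → ℤ)} (hq : DepOn q s) :
    Integrable (fun η => (1:ℝ)/2 * c x i η * q η) μ := by
  obtain ⟨Cq, hCq⟩ := hq.bounded
  have hCq0 : 0 ≤ Cq := le_trans (abs_nonneg _) (hCq (fun _ => false))
  have hL0 : 0 ≤ L := le_trans (abs_nonneg _) (hcb (fun _ => false))
  refine integrable_of_bdd ((measurable_const.mul hcm).mul hq.measurable)
    (C := 1/2 * L * Cq) fun η => ?_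
  rw [abs_mul, abs_mul]
  have : |(1:ℝ)/2| = 1/2 := by norm_num
  rw [this]
  have h1 : |c x i η| * |q η| ≤ L * Cq :=
    mul_le_mul (hcb η) (hCq η) (abs_nonneg _) hL0
  calc 1/2 * |c x i η| * |q η| = 1/2 * (|c x i η| * |q η|) := by ring
    _ ≤ 1/2 * (L * Cq) := by linarith
    _ = 1/2 * L * Cq := by ring


lemma DepOn.sub {f g : Cfg d → ℝ} {s : Finset (Fin d → ℤ)} (hf : DepOn f s)
    (hg : DepOn g s) : DepOn (fun η => f η - g η) s :=
  fun η η' h => by dsimp only; rw [hf η η' h, hg η η' h]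

lemma exchange_apply_left (x y : Fin d → ℤ) (η : Cfg d) : exchange x y η x = η y :=
  if_pos rfl

lemma exchange_apply_right {x y : Fin d → ℤ} (hxy : x ≠ y) (η : Cfg d) :
    exchange x y η y = η x := by
  unfold exchange
  rw [if_neg (fun h => hxy h.symm), if_pos rfl]

/-- the discrete gradient of the density field across the bond -/
def dlt (x : Fin d → ℤ) (i : Fin d) : Cfg d → ℝ :=
  fun η => site (x + unitVec d i) η - site x η

lemma dlt_depOn {x : Fin d → ℤ} (hx : x ∈ Λ) (i : Fin d) : DepOn (dlt x i) (plusF Λ) :=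
  (depOn_site' (add_unitVec_mem_plusF hx i)).sub (depOn_site' (subset_plusF hx))

lemma bond_nonneg {x : Fin d → ℤ} {i : Fin d} (hc1 : ∀ η, 1 ≤ c x i η) (v : Cfg d → ℝ) :
    0 ≤ ∫ η, 1/2 * c x i η * (Dv v x i η)^2 ∂μ :=
  integral_nonneg fun η => mul_nonneg (mul_nonneg (by norm_num)
    (le_trans zero_le_one (hc1 η))) (sq_nonneg _)

lemma bond_scale (x : Fin d → ℤ) (i : Fin d) (t : ℝ) (v : Cfg d → ℝ) :
    ∫ η, 1/2 * c x i η * (Dv (fun η' => t * v η') x i η)^2 ∂μ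
      = t^2 * ∫ η, 1/2 * c x i η * (Dv v x i η)^2 ∂μ := by
  rw [← integral_const_mul]
  refine integral_congr_ae (Filter.Eventually.of_forall fun η => ?_)
  unfold Dv
  ring

lemma bond_parallelogram (hP : IsProbabilityMeasure μ) {x : Fin d → ℤ} {i : Fin d}
    (hx : x ∈ Λ) (hcm : Measurable (c x i)) {L : ℝ} (hcb : ∀ η, |c x i η| ≤ L)
    {v w : Cfg d → ℝ} (hv : DepOn v (plusF Λ)) (hw : DepOn w (plusF Λ)) :
    (∫ η, 1/2 * c x i η * (Dv (fun η' => v η' + w η') x i η)^2 ∂μ)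
      + ∫ η, 1/2 * c x i η * (Dv (fun η' => v η' - w η') x i η)^2 ∂μ
    = 2 * (∫ η, 1/2 * c x i η * (Dv v x i η)^2 ∂μ)
      + 2 * ∫ η, 1/2 * c x i η * (Dv w x i η)^2 ∂μ := by
  have hiv : Integrable (fun η => 1/2 * c x i η * (Dv v x i η)^2) μ :=
    integrable_c_mul hP hcm hcb ((hv.dv hx i).outer (·^2))
  have hiw : Integrable (fun η => 1/2 * c x i η * (Dv w x i η)^2) μ :=
    integrable_c_mul hP hcm hcb ((hw.dv hx i).outer (·^2))
  have hivpw : Integrable (fun η => 1/2 * c x i η * (Dv (fun η' => v η' + w η') x i η)^2) μ :=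
    integrable_c_mul hP hcm hcb (((hv.add hw).dv hx i).outer (·^2))
  have hivmw : Integrable (fun η => 1/2 * c x i η * (Dv (fun η' => v η' - w η') x i η)^2) μ :=
    integrable_c_mul hP hcm hcb (((hv.sub hw).dv hx i).outer (·^2))
  calc (∫ η, 1/2 * c x i η * (Dv (fun η' => v η' + w η') x i η)^2 ∂μ)
      + ∫ η, 1/2 * c x i η * (Dv (fun η' => v η' - w η') x i η)^2 ∂μ
      = ∫ η, (1/2 * c x i η * (Dv (fun η' => v η' + w η') x i η)^2
          + 1/2 * c x i η * (Dv (fun η' => v η' - w η') x i η)^2) ∂μ :=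
        (integral_add hivpw hivmw).symm
    _ = ∫ η, (2 * (1/2 * c x i η * (Dv v x i η)^2)
          + 2 * (1/2 * c x i η * (Dv w x i η)^2)) ∂μ := by
        refine integral_congr_ae (Filter.Eventually.of_forall fun η => ?_)
        unfold Dv
        ring
    _ = (∫ η, 2 * (1/2 * c x i η * (Dv v x i η)^2) ∂μ)
          + ∫ η, 2 * (1/2 * c x i η * (Dv w x i η)^2) ∂μ :=
        integral_add (hiv.const_mul 2) (hiw.const_mul 2)
    _ = 2 * (∫ η, 1/2 * c x i η * (Dv v x i η)^2 ∂μ)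
          + 2 * ∫ η, 1/2 * c x i η * (Dv w x i η)^2 ∂μ := by
        rw [integral_const_mul 2 _, integral_const_mul 2 _]

lemma bond_upper (h0 : 0 ≤ ρ) (h1 : ρ ≤ 1) (hμ : IsBernoulliProduct ρ μ)
    {x : Fin d → ℤ} {i : Fin d} (hx : x ∈ Λ) (hcm : Measurable (c x i))
    (hc1 : ∀ η, 1 ≤ c x i η) (hcl : ∀ η, c x i η ≤ lam) (p : Fin d → ℝ) :
    ∫ η, 1/2 * c x i η * (Dv (affineFn (plusF Λ) p) x i η)^2 ∂μ
      ≤ lam * (p i)^2 * (ρ * (1 - ρ)) := by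
  haveI : IsProbabilityMeasure μ := hμ.1
  set y := x + unitVec d i with hy
  have hlam1 : (1:ℝ) ≤ lam := le_trans (hc1 (fun _ => false)) (hcl (fun _ => false))
  have hcb : ∀ η, |c x i η| ≤ lam := fun η => abs_le.2 ⟨by linarith [hc1 η], hcl η⟩
  have hldep : DepOn (affineFn (plusF Λ) p) (plusF Λ) := depOn_affineFn _ _
  have hpt : ∀ η, Dv (affineFn (plusF Λ) p) x i η = p i * (site x η - site y η) :=
    fun η => affine_exchange _ p (subset_plusF hx) (add_unitVec_mem_plusF hx i) η
  have hif : Integrable (fun η => 1/2 * c x i η * (Dv (affineFn (plusF Λ) p) x i η)^2) μ :=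
    integrable_c_mul hμ.1 hcm hcb ((hldep.dv hx i).outer (·^2))
  have hig : Integrable (fun η => 1/2 * lam * (p i * (site x η - site y η))^2) μ :=
    (((depOn_site' (subset_plusF hx)).sub
      (depOn_site' (add_unitVec_mem_plusF hx i))).outer
        (fun r => 1/2 * lam * (p i * r)^2)).integrable
  calc ∫ η, 1/2 * c x i η * (Dv (affineFn (plusF Λ) p) x i η)^2 ∂μ
      ≤ ∫ η, 1/2 * lam * (p i * (site x η - site y η))^2 ∂μ := by
        refine integral_mono hif hig fun η => ?_
        rw [hpt η]
        exact mul_le_mul_of_nonneg_right (by linarith [hcl η]) (sq_nonneg _)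
    _ = 1/2 * lam * (p i)^2 * ∫ η, (site x η - site y η)^2 ∂μ := by
        rw [← integral_const_mul]
        refine integral_congr_ae (Filter.Eventually.of_forall fun η => ?_)
        ring
    _ = lam * (p i)^2 * (ρ * (1 - ρ)) := by
        rw [integral_sq_site_diff h0 h1 hμ (ne_add_unitVec x i)]
        ring

lemma bond_lower (hμ : IsBernoulliProduct ρ μ) {x : Fin d → ℤ} {i : Fin d} (hx : x ∈ Λ)
    (hcm : Measurable (c x i)) {L : ℝ} (hcb : ∀ η, |c x i η| ≤ L)
    (hc1 : ∀ η, 1 ≤ c x i η) {v : Cfg d → ℝ} (hv : DepOn v (plusF Λ)) :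
    1/2 * ∫ η, (Dv v x i η)^2 ∂μ ≤ ∫ η, 1/2 * c x i η * (Dv v x i η)^2 ∂μ := by
  haveI : IsProbabilityMeasure μ := hμ.1
  rw [← integral_const_mul]
  refine integral_mono (((hv.dv hx i).outer (fun r => 1/2 * r^2)).integrable)
    (integrable_c_mul hμ.1 hcm hcb ((hv.dv hx i).outer (·^2))) fun η => ?_
  have h := sq_nonneg (Dv v x i η)
  nlinarith [hc1 η]


lemma integral_dv_mul_dlt (h0 : 0 ≤ ρ) (h1 : ρ ≤ 1) (hμ : IsBernoulliProduct ρ μ)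
    {v : Cfg d → ℝ} (hv : DepOn v (plusF Λ)) {x : Fin d → ℤ} (hx : x ∈ Λ) (i : Fin d) :
    ∫ η, Dv v x i η * dlt x i η ∂μ = -2 * ∫ η, v η * dlt x i η ∂μ := by
  haveI : IsProbabilityMeasure μ := hμ.1
  set y := x + unitVec d i with hy
  have hxy : x ≠ y := ne_add_unitVec x i
  have hx' : x ∈ plusF Λ := subset_plusF hx
  have hy' : y ∈ plusF Λ := add_unitVec_mem_plusF hx i
  have hf : DepOn (fun η => v η * dlt x i η) (plusF Λ) := hv.mul (dlt_depOn hx i)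
  have hδσ : ∀ η, dlt x i (exchange x y η) = -(dlt x i η) := by
    intro η
    unfold dlt site
    rw [← hy, exchange_apply_right hxy, exchange_apply_left]
    ring
  have hpt : ∀ η, Dv v x i η * dlt x i η
      = -(v (exchange x y η) * dlt x i (exchange x y η)) - v η * dlt x i η := by
    intro η
    unfold Dv
    rw [← hy, hδσ η]
    ring
  have hneg : Integrable (fun η => -(v (exchange x y η) * dlt x i (exchange x y η))) μ :=
    ((hf.comp_exchange hx' hy').outer (fun r => -r)).integrable
  have h2 : ∫ η, (-(v (exchange x y η) * dlt x i (exchange x y η)) - v η * dlt x i η) ∂μ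
      = (∫ η, -(v (exchange x y η) * dlt x i (exchange x y η)) ∂μ)
        - ∫ η, v η * dlt x i η ∂μ := integral_sub hneg hf.integrable
  have h3 : ∫ η, -(v (exchange x y η) * dlt x i (exchange x y η)) ∂μ
      = -∫ η, v (exchange x y η) * dlt x i (exchange x y η) ∂μ := integral_neg _
  have h4 : ∫ η, v (exchange x y η) * dlt x i (exchange x y η) ∂μ
      = ∫ η, v η * dlt x i η ∂μ := integral_comp_exchange h0 h1 hμ hf hx' hy'
  rw [integral_congr_ae (Filter.Eventually.of_forall hpt), h2, h3, h4]
  ring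

lemma site_mul_self (w : Fin d → ℤ) (η : Cfg d) : site w η * site w η = site w η := by
  unfold site
  cases η w <;> norm_num

lemma integral_site_mul_site' (h0 : 0 ≤ ρ) (h1 : ρ ≤ 1) (hμ : IsBernoulliProduct ρ μ)
    (w z : Fin d → ℤ) :
    ∫ η, site w η * site z η ∂μ = if w = z then ρ else ρ * ρ := by
  by_cases hwz : w = z
  · subst hwz
    rw [if_pos rfl]
    rw [integral_congr_ae (Filter.Eventually.of_forall (site_mul_self w))]
    exact integral_site h0 h1 hμ w
  · rw [if_neg hwz]
    exact integral_site_mul_site h0 h1 hμ hwz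

lemma integral_affine_mul_site (h0 : 0 ≤ ρ) (h1 : ρ ≤ 1) (hμ : IsBernoulliProduct ρ μ)
    (P : Finset (Fin d → ℤ)) (p : Fin d → ℝ) (z : Fin d → ℤ) :
    ∫ η, affineFn P p η * site z η ∂μ
      = ∑ w ∈ P, (∑ j, p j * ((w j : ℤ) : ℝ)) * (if w = z then ρ else ρ * ρ) := by
  haveI : IsProbabilityMeasure μ := hμ.1
  have hpt : ∀ η, affineFn P p η * site z η
      = ∑ w ∈ P, (∑ j, p j * ((w j : ℤ) : ℝ)) * (site w η * site z η) := by
    intro η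
    unfold affineFn site
    rw [Finset.sum_mul]
    exact Finset.sum_congr rfl fun w _ => by ring
  rw [integral_congr_ae (Filter.Eventually.of_forall hpt)]
  rw [integral_finset_sum _ (fun w _ => Integrable.const_mul
    (((depOn_site' (s := ({w, z} : Finset (Fin d → ℤ))) (by simp)).mul
      (depOn_site' (by simp))).integrable) _)]
  refine Finset.sum_congr rfl fun w _ => ?_
  rw [integral_const_mul, integral_site_mul_site' h0 h1 hμ w z]

lemma integral_affine_mul_dlt (h0 : 0 ≤ ρ) (h1 : ρ ≤ 1) (hμ : IsBernoulliProduct ρ μ)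
    (p : Fin d → ℝ) {x : Fin d → ℤ} (hx : x ∈ Λ) (i : Fin d) :
    ∫ η, affineFn (plusF Λ) p η * dlt x i η ∂μ = (ρ * (1 - ρ)) * p i := by
  haveI : IsProbabilityMeasure μ := hμ.1
  set y := x + unitVec d i with hy
  have hxy : x ≠ y := ne_add_unitVec x i
  have hx' : x ∈ plusF Λ := subset_plusF hx
  have hy' : y ∈ plusF Λ := add_unitVec_mem_plusF hx i
  have hldep : DepOn (affineFn (plusF Λ) p) (plusF Λ) := depOn_affineFn _ _
  have hi1 : Integrable (fun η => affineFn (plusF Λ) p η * site y η) μ :=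
    (hldep.mul (depOn_site' hy')).integrable
  have hi2 : Integrable (fun η => affineFn (plusF Λ) p η * site x η) μ :=
    (hldep.mul (depOn_site' hx')).integrable
  have hpt : ∀ η, affineFn (plusF Λ) p η * dlt x i η
      = affineFn (plusF Λ) p η * site y η - affineFn (plusF Λ) p η * site x η := by
    intro η
    unfold dlt
    rw [← hy]
    ring
  rw [integral_congr_ae (Filter.Eventually.of_forall hpt), integral_sub hi1 hi2,
    integral_affine_mul_site h0 h1 hμ _ p y, integral_affine_mul_site h0 h1 hμ _ p x,
    ← Finset.sum_sub_distrib]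
  have hzero : ∀ w ∈ plusF Λ, w ∉ ({x, y} : Finset (Fin d → ℤ)) →
      (∑ j, p j * ((w j : ℤ) : ℝ)) * (if w = y then ρ else ρ * ρ)
        - (∑ j, p j * ((w j : ℤ) : ℝ)) * (if w = x then ρ else ρ * ρ) = 0 := by
    intro w _ hw
    have hwy : w ≠ y := by
      intro h
      refine hw ?_
      rw [h]
      exact Finset.mem_insert.2 (Or.inr (Finset.mem_singleton_self _))
    have hwx : w ≠ x := by
      intro h
      refine hw ?_
      rw [h]
      exact Finset.mem_insert_self _ _
    rw [if_neg hwy, if_neg hwx, sub_self]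
  have hsub : ({x, y} : Finset (Fin d → ℤ)) ⊆ plusF Λ := by
    intro w hw
    rcases Finset.mem_insert.1 hw with h | h
    · subst h; exact hx'
    · rw [Finset.mem_singleton] at h; subst h; exact hy'
  rw [← Finset.sum_subset hsub hzero, Finset.sum_pair hxy]
  rw [if_neg hxy, if_pos rfl, if_pos rfl, if_neg (fun h => hxy h.symm)]
  have hc := coef_diff p x i
  rw [← hy] at hc
  linear_combination (ρ - ρ * ρ) * hc

lemma sum_split_const {α : Type*} [DecidableEq α] {A I : Finset α} (hIA : I ⊆ A)
    (h : α → ℝ) (κ : ℝ) (hoff : ∀ z, z ∉ I → h z = κ) :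
    ∑ z ∈ A, h z = (∑ z ∈ I, h z) + ((A.card - I.card : ℕ) : ℝ) * κ := by
  rw [← Finset.sum_sdiff hIA]
  have hcongr : ∀ z ∈ A \ I, h z = κ := fun z hz => hoff z (Finset.mem_sdiff.1 hz).2
  rw [Finset.sum_congr rfl hcongr, Finset.sum_const, Finset.card_sdiff_of_subset hIA, nsmul_eq_mul]
  ring

lemma sum_integral_g_mul_dlt (h0 : 0 ≤ ρ) (h1 : ρ ≤ 1) (hμ : IsBernoulliProduct ρ μ)
    {g : Cfg d → ℝ} (hg : DepOn g (interiorF Λ)) (i : Fin d) :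
    ∑ x ∈ Λ, ∫ η, g η * dlt x i η ∂μ = 0 := by
  haveI : IsProbabilityMeasure μ := hμ.1
  set h : (Fin d → ℤ) → ℝ := fun z => ∫ η, g η * site z η ∂μ with hh
  have hint : ∀ z : Fin d → ℤ, Integrable (fun η => g η * site z η) μ := fun z =>
    ((hg.mono Finset.subset_union_left).mul
      (depOn_site' (Finset.mem_union_right _ (Finset.mem_singleton_self z)))).integrable
  have hsplit : ∀ x : Fin d → ℤ, ∫ η, g η * dlt x i η ∂μ = h (x + unitVec d i) - h x := by
    intro x
    have hpt : ∀ η, g η * dlt x i η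
        = g η * site (x + unitVec d i) η - g η * site x η := by
      intro η
      unfold dlt
      ring
    rw [integral_congr_ae (Filter.Eventually.of_forall hpt),
      integral_sub (hint _) (hint _)]
  have hoff : ∀ z, z ∉ interiorF Λ → h z = ρ * ∫ η, g η ∂μ := by
    intro z hz
    exact integral_mul_site h0 h1 hμ hg hz
  rw [Finset.sum_congr rfl (fun x _ => hsplit x), Finset.sum_sub_distrib]
  have himg : ∑ x ∈ Λ, h (x + unitVec d i) = ∑ z ∈ Λ.image (· + unitVec d i), h z :=
    (Finset.sum_image (fun a _ b _ hab => by
      have := congrArg (fun w => w - unitVec d i) hab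
      simpa using this)).symm
  rw [himg,
    sum_split_const (interiorF_subset_image i) h _ hoff,
    sum_split_const (interiorF_subset.trans (Finset.Subset.refl Λ)) h _ hoff,
    card_image_add i]
  ring


lemma integral_dlt_sq (h0 : 0 ≤ ρ) (h1 : ρ ≤ 1) (hμ : IsBernoulliProduct ρ μ)
    (x : Fin d → ℤ) (i : Fin d) :
    ∫ η, (dlt x i η)^2 ∂μ = 2 * (ρ * (1 - ρ)) := by
  unfold dlt
  exact integral_sq_site_diff h0 h1 hμ (fun h => ne_add_unitVec x i h.symm)

lemma energy_sum_lower (h0 : 0 < ρ) (h1 : ρ < 1) (hμ : IsBernoulliProduct ρ μ)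
    (hΛ : Λ.Nonempty) (p : Fin d → ℝ) {g : Cfg d → ℝ} (hg : DepOn g (interiorF Λ)) :
    2 * (ρ * (1 - ρ)) * (Λ.card : ℝ) * (∑ i, p i ^ 2)
      ≤ ∑ x ∈ Λ, ∑ i : Fin d,
          ∫ η, (Dv (fun η' => affineFn (plusF Λ) p η' + g η') x i η)^2 ∂μ := by
  haveI : IsProbabilityMeasure μ := hμ.1
  have h0' : 0 ≤ ρ := le_of_lt h0
  have h1' : ρ ≤ 1 := le_of_lt h1
  set v : Cfg d → ℝ := fun η => affineFn (plusF Λ) p η + g η with hv'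
  have hv : DepOn v (plusF Λ) :=
    (depOn_affineFn _ _).add (hg.mono (interiorF_subset.trans subset_plusF))
  set χ : ℝ := ρ * (1 - ρ) with hχ
  have hχpos : 0 < χ := by
    rw [hχ]
    nlinarith
  set N : ℝ := (Λ.card : ℝ) with hN
  have hNpos : 0 < N := by
    rw [hN]
    exact_mod_cast Finset.card_pos.2 hΛ
  set S : ℝ := ∑ i, p i ^ 2 with hS
  have hSnn : 0 ≤ S := Finset.sum_nonneg fun i _ => sq_nonneg _
  -- computation of the cross term
  have hT : ∀ i : Fin d, ∑ x ∈ Λ, ∫ η, Dv v x i η * dlt x i η ∂μ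
      = -2 * (χ * p i * N) := by
    intro i
    have hterm : ∀ x ∈ Λ, ∫ η, Dv v x i η * dlt x i η ∂μ
        = -2 * ((∫ η, affineFn (plusF Λ) p η * dlt x i η ∂μ)
            + ∫ η, g η * dlt x i η ∂μ) := by
      intro x hx
      rw [integral_dv_mul_dlt h0' h1' hμ hv hx i]
      congr 1
      have hil : Integrable (fun η => affineFn (plusF Λ) p η * dlt x i η) μ :=
        ((depOn_affineFn _ _).mul (dlt_depOn hx i)).integrable
      have hig : Integrable (fun η => g η * dlt x i η) μ :=
        ((hg.mono (interiorF_subset.trans subset_plusF)).mul (dlt_depOn hx i)).integrable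
      rw [← integral_add hil hig]
      refine integral_congr_ae (Filter.Eventually.of_forall fun η => ?_)
      show v η * dlt x i η = _
      rw [hv']
      ring
    rw [Finset.sum_congr rfl hterm, ← Finset.mul_sum, Finset.sum_add_distrib,
      sum_integral_g_mul_dlt h0' h1' hμ hg i, add_zero,
      Finset.sum_congr rfl (fun x hx => integral_affine_mul_dlt h0' h1' hμ p hx i),
      Finset.sum_const, nsmul_eq_mul]
    rw [hχ, hN]
    ring
  -- rewrite all integrals as weighted sums
  set P := plusF Λ with hP
  set W : ({x // x ∈ P} → Bool) → ℝ := cylW ρ P with hW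
  have hWnn : ∀ b, 0 ≤ W b := cylW_nonneg h0' h1' P
  have hmaster : ∀ (F : Cfg d → ℝ), DepOn F P →
      ∫ η, F η ∂μ = ∑ b : {x // x ∈ P} → Bool, W b * F (extb P b) :=
    fun F hF => integral_depOn h0' h1' hμ hF
  -- Cauchy-Schwarz on the big index set
  set sidx := Λ ×ˢ ((Finset.univ : Finset (Fin d)) ×ˢ
    (Finset.univ : Finset ({x // x ∈ P} → Bool))) with hsidx
  set af : (Fin d → ℤ) × (Fin d × ({x // x ∈ P} → Bool)) → ℝ :=
    fun k => Real.sqrt (W k.2.2) * Dv v k.1 k.2.1 (extb P k.2.2) with haf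
  set bf : (Fin d → ℤ) × (Fin d × ({x // x ∈ P} → Bool)) → ℝ :=
    fun k => Real.sqrt (W k.2.2) * (p k.2.1 * dlt k.1 k.2.1 (extb P k.2.2)) with hbf
  have hCS := Finset.sum_mul_sq_le_sq_mul_sq sidx af bf
  have hexp : ∀ f : (Fin d → ℤ) × (Fin d × ({x // x ∈ P} → Bool)) → ℝ,
      ∑ k ∈ sidx, f k = ∑ x ∈ Λ, ∑ i : Fin d,
        ∑ b : {x // x ∈ P} → Bool, f (x, (i, b)) := by
    intro f
    rw [hsidx, Finset.sum_product]
    exact Finset.sum_congr rfl fun x _ => by rw [Finset.sum_product]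
  have hsqrtW : ∀ b, Real.sqrt (W b) * Real.sqrt (W b) = W b :=
    fun b => Real.mul_self_sqrt (hWnn b)
  -- identify the three sums
  have hab : ∑ k ∈ sidx, af k * bf k = -2 * (χ * N * S) := by
    rw [hexp]
    have hinner : ∀ x ∈ Λ, ∀ i : Fin d,
        ∑ b : {x // x ∈ P} → Bool, af (x, (i, b)) * bf (x, (i, b))
          = p i * ∫ η, Dv v x i η * dlt x i η ∂μ := by
      intro x hx i
      have hm : ∫ η, Dv v x i η * dlt x i η ∂μ = ∑ b : {x // x ∈ P} → Bool,
          W b * (Dv v x i (extb P b) * dlt x i (extb P b)) :=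
        hmaster _ ((hv.dv hx i).mul (dlt_depOn hx i))
      rw [hm, Finset.mul_sum]
      refine Finset.sum_congr rfl fun b _ => ?_
      rw [haf, hbf]
      dsimp only
      rw [show Real.sqrt (W b) * Dv v x i (extb P b) *
        (Real.sqrt (W b) * (p i * dlt x i (extb P b)))
        = (Real.sqrt (W b) * Real.sqrt (W b)) *
          (Dv v x i (extb P b) * (p i * dlt x i (extb P b))) from by ring, hsqrtW b]
      ring
    calc ∑ x ∈ Λ, ∑ i : Fin d, ∑ b : {x // x ∈ P} → Bool, af (x, (i, b)) * bf (x, (i, b))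
        = ∑ x ∈ Λ, ∑ i : Fin d, p i * ∫ η, Dv v x i η * dlt x i η ∂μ :=
          Finset.sum_congr rfl fun x hx => Finset.sum_congr rfl fun i _ => hinner x hx i
      _ = ∑ i : Fin d, ∑ x ∈ Λ, p i * ∫ η, Dv v x i η * dlt x i η ∂μ := Finset.sum_comm
      _ = ∑ i : Fin d, p i * (-2 * (χ * p i * N)) := by
          refine Finset.sum_congr rfl fun i _ => ?_
          rw [← Finset.mul_sum, hT i]
      _ = ∑ i : Fin d, (-2 * (χ * N)) * p i ^ 2 :=
          Finset.sum_congr rfl fun i _ => by ring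
      _ = -2 * (χ * N * S) := by
          rw [hS, ← Finset.mul_sum]
          ring
  have haa : ∑ k ∈ sidx, af k ^ 2 = ∑ x ∈ Λ, ∑ i : Fin d,
      ∫ η, (Dv v x i η)^2 ∂μ := by
    rw [hexp]
    refine Finset.sum_congr rfl fun x hx => Finset.sum_congr rfl fun i _ => ?_
    have hm : ∫ η, (Dv v x i η)^2 ∂μ = ∑ b : {x // x ∈ P} → Bool,
        W b * (Dv v x i (extb P b))^2 := hmaster _ ((hv.dv hx i).outer (·^2))
    rw [hm]
    refine Finset.sum_congr rfl fun b _ => ?_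
    rw [haf]
    dsimp only
    rw [mul_pow, Real.sq_sqrt (hWnn b)]
  have hbb : ∑ k ∈ sidx, bf k ^ 2 = N * (2 * χ * S) := by
    rw [hexp]
    have hinner : ∀ x ∈ Λ, ∀ i : Fin d,
        ∑ b : {x // x ∈ P} → Bool, bf (x, (i, b)) ^ 2 = p i ^ 2 * (2 * χ) := by
      intro x hx i
      have hm : ∫ η, (dlt x i η)^2 ∂μ = ∑ b : {x // x ∈ P} → Bool,
          W b * (dlt x i (extb P b))^2 := hmaster _ ((dlt_depOn hx i).outer (·^2))
      have hval : ∑ b : {x // x ∈ P} → Bool, W b * (dlt x i (extb P b))^2 = 2 * χ := by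
        rw [← hm, integral_dlt_sq h0' h1' hμ x i, hχ]
      calc ∑ b : {x // x ∈ P} → Bool, bf (x, (i, b)) ^ 2
          = ∑ b : {x // x ∈ P} → Bool, p i ^ 2 * (W b * (dlt x i (extb P b))^2) := by
            refine Finset.sum_congr rfl fun b _ => ?_
            rw [hbf]
            dsimp only
            rw [show (Real.sqrt (W b) * (p i * dlt x i (extb P b)))^2
              = p i ^ 2 * ((Real.sqrt (W b) * Real.sqrt (W b)) *
                (dlt x i (extb P b))^2) from by ring, hsqrtW b]
        _ = p i ^ 2 * (2 * χ) := by rw [← Finset.mul_sum, hval]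
    calc ∑ x ∈ Λ, ∑ i : Fin d, ∑ b : {x // x ∈ P} → Bool, bf (x, (i, b)) ^ 2
        = ∑ x ∈ Λ, ∑ i : Fin d, p i ^ 2 * (2 * χ) :=
          Finset.sum_congr rfl fun x hx => Finset.sum_congr rfl fun i _ => hinner x hx i
      _ = ∑ x ∈ Λ, ∑ i : Fin d, (2 * χ) * p i ^ 2 :=
          Finset.sum_congr rfl fun x _ => Finset.sum_congr rfl fun i _ => mul_comm _ _
      _ = ∑ x ∈ Λ, (2 * χ) * S :=
          Finset.sum_congr rfl fun x _ => by rw [hS, ← Finset.mul_sum]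
      _ = N * (2 * χ * S) := by
          rw [Finset.sum_const, nsmul_eq_mul, hN]
  rw [hab, haa, hbb] at hCS
  -- conclude
  set E := ∑ x ∈ Λ, ∑ i : Fin d, ∫ η, (Dv v x i η)^2 ∂μ with hE
  have hEnn : 0 ≤ E :=
    Finset.sum_nonneg fun x _ => Finset.sum_nonneg fun i _ =>
      integral_nonneg fun η => sq_nonneg _
  rcases eq_or_lt_of_le hSnn with hS0 | hSpos
  · rw [← hS0]
    simpa using hEnn
  · have hM : 0 < 2 * χ * N * S :=
      mul_pos (mul_pos (mul_pos two_pos hχpos) hNpos) hSpos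
    have h2 : (2 * χ * N * S) * (2 * χ * N * S) ≤ E * (2 * χ * N * S) := by
      calc (2 * χ * N * S) * (2 * χ * N * S) = (-2 * (χ * N * S))^2 := by ring
        _ ≤ E * (N * (2 * χ * S)) := hCS
        _ = E * (2 * χ * N * S) := by ring
    exact le_of_mul_le_mul_right h2 hM


lemma abs_c_le (hc_bdd : ∀ x i η, 1 ≤ c x i η ∧ c x i η ≤ lam) (x : Fin d → ℤ)
    (i : Fin d) : ∀ η, |c x i η| ≤ lam := by
  intro η
  rw [abs_of_pos (lt_of_lt_of_le one_pos (hc_bdd x i η).1)]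
  exact (hc_bdd x i η).2

lemma dirichlet_lower (h0 : 0 < ρ) (h1 : ρ < 1) (hμ : IsBernoulliProduct ρ μ)
    (hc_meas : ∀ x i, Measurable (c x i))
    (hc_bdd : ∀ x i η, 1 ≤ c x i η ∧ c x i η ≤ lam)
    (hΛ : Λ.Nonempty) (p : Fin d → ℝ) {g : Cfg d → ℝ} (hg : DepOn g (interiorF Λ)) :
    (1/2) * ∑ i, p i ^ 2
      ≤ dirichletEnergy ρ μ c Λ (fun η => affineFn (plusF Λ) p η + g η) := by
  haveI : IsProbabilityMeasure μ := hμ.1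
  have h0' : 0 ≤ ρ := le_of_lt h0
  have h1' : ρ ≤ 1 := le_of_lt h1
  set v : Cfg d → ℝ := fun η => affineFn (plusF Λ) p η + g η with hv'
  have hv : DepOn v (plusF Λ) :=
    (depOn_affineFn _ _).add (hg.mono (interiorF_subset.trans subset_plusF))
  set χ : ℝ := ρ * (1 - ρ) with hχ
  have hχpos : 0 < χ := by rw [hχ]; nlinarith
  set N : ℝ := (Λ.card : ℝ) with hN
  have hNpos : 0 < N := by rw [hN]; exact_mod_cast Finset.card_pos.2 hΛ
  set S : ℝ := ∑ i, p i ^ 2 with hS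
  have hE := energy_sum_lower h0 h1 hμ hΛ p hg
  rw [← hv', ← hχ, ← hN, ← hS] at hE
  have hK : (0:ℝ) < 1 / (2 * χ * N) := by positivity
  have hbond : ∀ x ∈ Λ, ∀ i : Fin d, 1/2 * ∫ η, (Dv v x i η)^2 ∂μ
      ≤ ∫ η, 1/2 * c x i η * (Dv v x i η)^2 ∂μ :=
    fun x hx i => bond_lower hμ hx (hc_meas x i) (abs_c_le hc_bdd x i)
      (fun η => (hc_bdd x i η).1) hv
  have hA : χ * N * S ≤ ∑ x ∈ Λ, ∑ i : Fin d,
      ∫ η, 1/2 * c x i η * (Dv v x i η)^2 ∂μ := by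
    calc χ * N * S = 1/2 * (2 * χ * N * S) := by ring
      _ ≤ 1/2 * ∑ x ∈ Λ, ∑ i : Fin d, ∫ η, (Dv v x i η)^2 ∂μ := by linarith
      _ = ∑ x ∈ Λ, ∑ i : Fin d, 1/2 * ∫ η, (Dv v x i η)^2 ∂μ := by
          rw [Finset.mul_sum]
          exact Finset.sum_congr rfl fun x _ => Finset.mul_sum _ _ _
      _ ≤ ∑ x ∈ Λ, ∑ i : Fin d, ∫ η, 1/2 * c x i η * (Dv v x i η)^2 ∂μ :=
          Finset.sum_le_sum fun x hx => Finset.sum_le_sum fun i _ => hbond x hx i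
  have hQ : dirichletEnergy ρ μ c Λ v = (1 / (2 * χ * N)) *
      ∑ x ∈ Λ, ∑ i : Fin d, ∫ η, 1/2 * c x i η * (Dv v x i η)^2 ∂μ := by
    rw [dirichletEnergy_eq v, hχ, hN]
  rw [hQ]
  calc (1/2) * S = (1 / (2 * χ * N)) * (χ * N * S) := by
        field_simp
    _ ≤ _ := mul_le_mul_of_nonneg_left hA (le_of_lt hK)

lemma dirichlet_upper (h0 : 0 < ρ) (h1 : ρ < 1) (hμ : IsBernoulliProduct ρ μ)
    (hc_meas : ∀ x i, Measurable (c x i))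
    (hc_bdd : ∀ x i η, 1 ≤ c x i η ∧ c x i η ≤ lam)
    (hΛ : Λ.Nonempty) (p : Fin d → ℝ) :
    dirichletEnergy ρ μ c Λ (affineFn (plusF Λ) p)
      ≤ lam / 2 * ∑ i, p i ^ 2 := by
  haveI : IsProbabilityMeasure μ := hμ.1
  have h0' : 0 ≤ ρ := le_of_lt h0
  have h1' : ρ ≤ 1 := le_of_lt h1
  set χ : ℝ := ρ * (1 - ρ) with hχ
  have hχpos : 0 < χ := by rw [hχ]; nlinarith
  set N : ℝ := (Λ.card : ℝ) with hN
  have hNpos : 0 < N := by rw [hN]; exact_mod_cast Finset.card_pos.2 hΛ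
  set S : ℝ := ∑ i, p i ^ 2 with hS
  have hK : (0:ℝ) < 1 / (2 * χ * N) := by positivity
  have hA : ∑ x ∈ Λ, ∑ i : Fin d,
      ∫ η, 1/2 * c x i η * (Dv (affineFn (plusF Λ) p) x i η)^2 ∂μ
      ≤ N * (lam * χ * S) := by
    calc ∑ x ∈ Λ, ∑ i : Fin d,
        ∫ η, 1/2 * c x i η * (Dv (affineFn (plusF Λ) p) x i η)^2 ∂μ
        ≤ ∑ x ∈ Λ, ∑ i : Fin d, lam * (p i)^2 * χ :=
          Finset.sum_le_sum fun x hx => Finset.sum_le_sum fun i _ =>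
            bond_upper h0' h1' hμ hx (hc_meas x i) (fun η => (hc_bdd x i η).1)
              (fun η => (hc_bdd x i η).2) p
      _ = ∑ x ∈ Λ, lam * χ * S := by
          refine Finset.sum_congr rfl fun x _ => ?_
          rw [hS, Finset.mul_sum]
          exact Finset.sum_congr rfl fun i _ => by ring
      _ = N * (lam * χ * S) := by
          rw [Finset.sum_const, nsmul_eq_mul, hN]
  have hQ : dirichletEnergy ρ μ c Λ (affineFn (plusF Λ) p) = (1 / (2 * χ * N)) *
      ∑ x ∈ Λ, ∑ i : Fin d,
        ∫ η, 1/2 * c x i η * (Dv (affineFn (plusF Λ) p) x i η)^2 ∂μ := by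
    rw [dirichletEnergy_eq, hχ, hN]
  rw [hQ]
  calc (1 / (2 * χ * N)) * ∑ x ∈ Λ, ∑ i : Fin d,
      ∫ η, 1/2 * c x i η * (Dv (affineFn (plusF Λ) p) x i η)^2 ∂μ
      ≤ (1 / (2 * χ * N)) * (N * (lam * χ * S)) :=
        mul_le_mul_of_nonneg_left hA (le_of_lt hK)
    _ = lam / 2 * S := by
        field_simp

lemma dirichlet_scale (t : ℝ) (v : Cfg d → ℝ) :
    dirichletEnergy ρ μ c Λ (fun η => t * v η)
      = t^2 * dirichletEnergy ρ μ c Λ v := by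
  rw [dirichletEnergy_eq, dirichletEnergy_eq]
  rw [Finset.sum_congr rfl (fun x (hx : x ∈ Λ) => Finset.sum_congr rfl
    (fun i _ => bond_scale (μ := μ) x i t v))]
  rw [show ∑ x ∈ Λ, ∑ i : Fin d, t^2 * (∫ η, 1/2 * c x i η * (Dv v x i η)^2 ∂μ)
    = t^2 * ∑ x ∈ Λ, ∑ i : Fin d, ∫ η, 1/2 * c x i η * (Dv v x i η)^2 ∂μ from by
      rw [Finset.mul_sum]
      exact Finset.sum_congr rfl fun x _ => (Finset.mul_sum _ _ _).symm]
  ring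

lemma dirichlet_parallelogram (hμ : IsBernoulliProduct ρ μ)
    (hc_meas : ∀ x i, Measurable (c x i))
    (hc_bdd : ∀ x i η, 1 ≤ c x i η ∧ c x i η ≤ lam)
    {v w : Cfg d → ℝ} (hv : DepOn v (plusF Λ)) (hw : DepOn w (plusF Λ)) :
    dirichletEnergy ρ μ c Λ (fun η => v η + w η)
      + dirichletEnergy ρ μ c Λ (fun η => v η - w η)
    = 2 * dirichletEnergy ρ μ c Λ v + 2 * dirichletEnergy ρ μ c Λ w := by
  haveI : IsProbabilityMeasure μ := hμ.1
  rw [dirichletEnergy_eq, dirichletEnergy_eq, dirichletEnergy_eq, dirichletEnergy_eq]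
  have key : (∑ x ∈ Λ, ∑ i : Fin d,
        ∫ η, 1/2 * c x i η * (Dv (fun η' => v η' + w η') x i η)^2 ∂μ)
      + ∑ x ∈ Λ, ∑ i : Fin d,
        ∫ η, 1/2 * c x i η * (Dv (fun η' => v η' - w η') x i η)^2 ∂μ
      = 2 * (∑ x ∈ Λ, ∑ i : Fin d, ∫ η, 1/2 * c x i η * (Dv v x i η)^2 ∂μ)
      + 2 * ∑ x ∈ Λ, ∑ i : Fin d, ∫ η, 1/2 * c x i η * (Dv w x i η)^2 ∂μ := by
    calc (∑ x ∈ Λ, ∑ i : Fin d,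
          ∫ η, 1/2 * c x i η * (Dv (fun η' => v η' + w η') x i η)^2 ∂μ)
        + ∑ x ∈ Λ, ∑ i : Fin d,
          ∫ η, 1/2 * c x i η * (Dv (fun η' => v η' - w η') x i η)^2 ∂μ
        = ∑ x ∈ Λ, ((∑ i : Fin d,
            ∫ η, 1/2 * c x i η * (Dv (fun η' => v η' + w η') x i η)^2 ∂μ)
          + ∑ i : Fin d,
            ∫ η, 1/2 * c x i η * (Dv (fun η' => v η' - w η') x i η)^2 ∂μ) :=
          Finset.sum_add_distrib.symm
      _ = ∑ x ∈ Λ, (2 * (∑ i : Fin d, ∫ η, 1/2 * c x i η * (Dv v x i η)^2 ∂μ)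
          + 2 * ∑ i : Fin d, ∫ η, 1/2 * c x i η * (Dv w x i η)^2 ∂μ) := by
          refine Finset.sum_congr rfl fun x hx => ?_
          rw [← Finset.sum_add_distrib,
            Finset.sum_congr rfl (fun i (_ : i ∈ (Finset.univ : Finset (Fin d))) =>
              bond_parallelogram hμ.1 hx (hc_meas x i) (abs_c_le hc_bdd x i) hv hw),
            Finset.sum_add_distrib, ← Finset.mul_sum, ← Finset.mul_sum]
      _ = 2 * (∑ x ∈ Λ, ∑ i : Fin d, ∫ η, 1/2 * c x i η * (Dv v x i η)^2 ∂μ)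
          + 2 * ∑ x ∈ Λ, ∑ i : Fin d, ∫ η, 1/2 * c x i η * (Dv w x i η)^2 ∂μ := by
          rw [Finset.sum_add_distrib, ← Finset.mul_sum, ← Finset.mul_sum]
  linear_combination (1 / (2 * (ρ * (1 - ρ)) * (Λ.card : ℝ))) * key

end Energy

lemma cauchy_linear {f : ℝ → ℝ} (hadd : ∀ s t, f (s + t) = f s + f t)
    {C : ℝ} (hb : ∀ t, |t| ≤ 1 → |f t| ≤ C) (t : ℝ) : f t = t * f 1 := by
  have h0 : f 0 = 0 := by
    have := hadd 0 0
    rw [add_zero] at this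
    linarith
  have hsub : ∀ a b, f (a - b) = f a - f b := by
    intro a b
    have := hadd (a - b) b
    rw [sub_add_cancel] at this
    linarith
  have hnat : ∀ (n : ℕ) (s : ℝ), f ((n:ℝ) * s) = (n:ℝ) * f s := by
    intro n
    induction n with
    | zero => intro s; simp [h0]
    | succ k ih =>
      intro s
      push_cast
      rw [add_mul, one_mul, hadd, ih]
      ring
  have hint : ∀ (m : ℤ) (s : ℝ), f ((m:ℝ) * s) = (m:ℝ) * f s := by
    intro m s
    rcases m with n | n
    · push_cast
      exact hnat n s
    · have h1 : ((Int.negSucc n : ℤ) : ℝ) * s = 0 - (((n+1 : ℕ) : ℝ) * s) := by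
        push_cast
        ring
      rw [h1, hsub, h0, hnat]
      push_cast
      ring
  by_contra hne
  set gl := f 1 with hgl
  set ε := f t - t * gl with hεdef
  have hε : ε ≠ 0 := sub_ne_zero.2 hne
  have hεpos : 0 < |ε| := abs_pos.2 hε
  have key : ∀ n : ℕ, (n:ℝ) * |ε| ≤ C + |gl| := by
    intro n
    set m : ℤ := ⌊(n:ℝ) * t⌋ with hm
    set u : ℝ := (n:ℝ) * t - (m:ℝ) with hu
    have hufr : u = Int.fract ((n:ℝ) * t) := by rw [hu, hm, Int.fract]
    have h2 : |u| ≤ 1 := by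
      rw [abs_le]
      constructor
      · rw [hufr]; linarith [Int.fract_nonneg ((n:ℝ) * t)]
      · rw [hufr]; linarith [Int.fract_lt_one ((n:ℝ) * t)]
    have h1 : f u = (n:ℝ) * f t - (m:ℝ) * gl := by
      rw [hu, hsub, hnat]
      have := hint m 1
      rw [mul_one] at this
      rw [this, ← hgl]
    have h4 : (n:ℝ) * ε = f u - u * gl := by
      rw [h1, hu, hεdef]
      ring
    calc (n:ℝ) * |ε| = |(n:ℝ) * ε| := by
          rw [abs_mul, abs_of_nonneg (show (0:ℝ) ≤ (n:ℝ) from Nat.cast_nonneg n)]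
      _ = |f u - u * gl| := by rw [h4]
      _ ≤ |f u| + |u| * |gl| := by
          calc |f u - u * gl| ≤ |f u| + |u * gl| := abs_sub _ _
            _ = |f u| + |u| * |gl| := by rw [abs_mul]
      _ ≤ C + 1 * |gl| := by
          have := hb u h2
          have h5 : |u| * |gl| ≤ 1 * |gl| :=
            mul_le_mul_of_nonneg_right h2 (abs_nonneg _)
          linarith
      _ = C + |gl| := by ring
  obtain ⟨n, hn⟩ := exists_nat_gt ((C + |gl|) / |ε|)
  have h6 := key n
  rw [div_lt_iff₀ hεpos] at hn
  linarith

lemma exists_bilinear {d : ℕ} (ν : (Fin d → ℝ) → ℝ)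
    (hpar : ∀ p q, ν (p + q) + ν (p - q) = 2 * ν p + 2 * ν q)
    (hnn : ∀ p, 0 ≤ ν p) {K : ℝ} (hK : 0 ≤ K)
    (hub : ∀ p, ν p ≤ K * ∑ i, p i ^ 2) :
    ∃ B : (Fin d → ℝ) → (Fin d → ℝ) → ℝ,
      (∀ p q, B p q = B q p) ∧ (∀ p, ν p = B p p) ∧
      (∀ p q r, B (p + q) r = B p r + B q r) ∧
      (∀ (t : ℝ) (p q : Fin d → ℝ), B (t • p) q = t * B p q) := by
  have hν0 : ν 0 = 0 := by
    have := hpar 0 0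
    rw [add_zero, sub_zero] at this
    linarith
  set B : (Fin d → ℝ) → (Fin d → ℝ) → ℝ :=
    fun p q => (ν (p + q) - ν p - ν q) / 2 with hB
  have hsymm : ∀ p q, B p q = B q p := by
    intro p q
    simp only [hB]
    rw [add_comm]
    ring
  have hdiag : ∀ p, ν p = B p p := by
    intro p
    have h := hpar p p
    rw [sub_self, hν0] at h
    simp only [hB]
    linarith
  have hzero : ∀ q, B 0 q = 0 := by
    intro q
    simp only [hB]
    rw [zero_add]
    simp [hν0]
  have hident : ∀ u v w, B (u + v) w + B (u - v) w = 2 * B u w := by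
    intro u v w
    have e1 : ν (u + v + w) + ν (u - v + w) = 2 * ν (u + w) + 2 * ν v := by
      have h := hpar (u + w) v
      rw [show u + w + v = u + v + w from by abel, show u + w - v = u - v + w from by abel]
        at h
      exact h
    have e2 := hpar u v
    simp only [hB]
    linarith
  have hdouble : ∀ u w, B (u + u) w = 2 * B u w := by
    intro u w
    have := hident u u w
    rw [sub_self, hzero] at this
    linarith
  have haddl : ∀ p q r, B (p + q) r = B p r + B q r := by
    intro p q r
    have hu : ((2:ℝ)⁻¹ • (p + q)) + ((2:ℝ)⁻¹ • (p - q)) = p := by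
      funext i
      simp [Pi.smul_apply, Pi.add_apply, Pi.sub_apply, smul_eq_mul]
      ring
    have hv : ((2:ℝ)⁻¹ • (p + q)) - ((2:ℝ)⁻¹ • (p - q)) = q := by
      funext i
      simp [Pi.smul_apply, Pi.add_apply, Pi.sub_apply, smul_eq_mul]
      ring
    have hw : ((2:ℝ)⁻¹ • (p + q)) + ((2:ℝ)⁻¹ • (p + q)) = p + q := by
      funext i
      simp [Pi.smul_apply, Pi.add_apply, smul_eq_mul]
      ring
    have h1 := hident ((2:ℝ)⁻¹ • (p + q)) ((2:ℝ)⁻¹ • (p - q)) r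
    rw [hu, hv] at h1
    have h2 := hdouble ((2:ℝ)⁻¹ • (p + q)) r
    rw [hw] at h2
    linarith
  have habs : ∀ p q, |B p q| ≤ (ν (p + q) + ν p + ν q) / 2 := by
    intro p q
    simp only [hB]
    rw [abs_le]
    constructor
    · have := hnn (p + q)
      have := hnn p
      have := hnn q
      linarith
    · have := hnn (p + q)
      have := hnn p
      have := hnn q
      linarith
  have hsmul : ∀ (t : ℝ) (p q : Fin d → ℝ), B (t • p) q = t * B p q := by
    intro t p q
    set φ : ℝ → ℝ := fun s => B (s • p) q with hφ
    have hφadd : ∀ s u, φ (s + u) = φ s + φ u := by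
      intro s u
      simp only [hφ]
      rw [add_smul, haddl]
    have hbound : ∀ s, |s| ≤ 1 →
        |φ s| ≤ (K * (2 * ∑ i, p i ^ 2 + 2 * ∑ i, q i ^ 2)
          + K * ∑ i, p i ^ 2 + K * ∑ i, q i ^ 2) / 2 := by
      intro s hs
      have hsq : s^2 ≤ 1 := by nlinarith [abs_nonneg s, abs_le.1 hs]
      have h1 : ν (s • p + q) ≤ K * (2 * ∑ i, p i ^ 2 + 2 * ∑ i, q i ^ 2) := by
        calc ν (s • p + q) ≤ K * ∑ i, (s • p + q) i ^ 2 := hub _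
          _ ≤ K * (2 * ∑ i, p i ^ 2 + 2 * ∑ i, q i ^ 2) := by
            refine mul_le_mul_of_nonneg_left ?_ hK
            rw [Finset.mul_sum, Finset.mul_sum, ← Finset.sum_add_distrib]
            refine Finset.sum_le_sum fun i _ => ?_
            simp only [Pi.add_apply, Pi.smul_apply, smul_eq_mul]
            nlinarith [sq_nonneg (p i), sq_nonneg (q i), sq_nonneg (s * p i - q i),
              sq_nonneg (s * p i + q i)]
      have h2 : ν (s • p) ≤ K * ∑ i, p i ^ 2 := by
        calc ν (s • p) ≤ K * ∑ i, (s • p) i ^ 2 := hub _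
          _ ≤ K * ∑ i, p i ^ 2 := by
            refine mul_le_mul_of_nonneg_left ?_ hK
            refine Finset.sum_le_sum fun i _ => ?_
            simp only [Pi.smul_apply, smul_eq_mul]
            nlinarith [sq_nonneg (p i)]
      have h3 : ν q ≤ K * ∑ i, q i ^ 2 := hub q
      have h4 := habs (s • p) q
      have h5 : |φ s| ≤ (ν (s • p + q) + ν (s • p) + ν q) / 2 := h4
      have h6 := hnn (s • p + q)
      have h7 := hnn (s • p)
      have h8 := hnn q
      calc |φ s| ≤ (ν (s • p + q) + ν (s • p) + ν q) / 2 := h5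
        _ ≤ _ := by linarith
    have := cauchy_linear hφadd hbound t
    simp only [hφ] at this
    rw [one_smul] at this
    exact this
  exact ⟨B, hsymm, hdiag, haddl, hsmul⟩


end NubarAux

open NubarAux

/-- Proposition 4.1 (2): `ν̄(ρ,Λ,·)` is a quadratic form: there is a symmetric positive
matrix `D̄(ρ,Λ)` with `Id ≤ D̄(ρ,Λ) ≤ λ·Id` such that `ν̄(ρ,Λ,p) = (1/2) p·D̄(ρ,Λ)p`. -/
theorem nubar_quadratic_form {d : ℕ} (ρ lam : ℝ) (hρ : ρ ∈ Set.Ioo (0 : ℝ) 1)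
    (hlam : 1 ≤ lam)
    (μ : Measure ((Fin d → ℤ) → Bool)) (hμ : IsBernoulliProduct ρ μ)
    (c : (Fin d → ℤ) → Fin d → ((Fin d → ℤ) → Bool) → ℝ)
    (hc_meas : ∀ x i, Measurable (c x i))
    (hc_bdd : ∀ x i η, 1 ≤ c x i η ∧ c x i η ≤ lam)
    (Λ : Finset (Fin d → ℤ)) (hΛ : Λ.Nonempty) :
    ∃ D : Fin d → Fin d → ℝ,
      (∀ i j, D i j = D j i) ∧
      (∀ p : Fin d → ℝ, ∑ i, p i ^ 2 ≤ ∑ i, p i * ∑ j, D i j * p j) ∧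
      (∀ p : Fin d → ℝ, (∑ i, p i * ∑ j, D i j * p j) ≤ lam * ∑ i, p i ^ 2) ∧
      ∀ p : Fin d → ℝ, nubar ρ μ c Λ p = (1 / 2) * ∑ i, p i * ∑ j, D i j * p j := by
  classical
  obtain ⟨h0, h1⟩ := hρ
  set Sset : (Fin d → ℝ) → Set ℝ := fun p => {r : ℝ | ∃ g : Cfg d → ℝ,
    DepOn g (interiorF Λ) ∧
    r = dirichletEnergy ρ μ c Λ (fun η => affineFn (plusF Λ) p η + g η)} with hSset
  have hνinf : ∀ p, nubar ρ μ c Λ p = sInf (Sset p) := fun p => rfl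
  have hmem : ∀ (p : Fin d → ℝ) (g : Cfg d → ℝ), DepOn g (interiorF Λ) →
      dirichletEnergy ρ μ c Λ (fun η => affineFn (plusF Λ) p η + g η) ∈ Sset p :=
    fun p g hg => ⟨g, hg, rfl⟩
  have hdep0 : DepOn (fun _ : Cfg d => (0:ℝ)) (interiorF Λ) := fun _ _ _ => rfl
  have hne : ∀ p, (Sset p).Nonempty := fun p => ⟨_, hmem p _ hdep0⟩
  have hlb : ∀ p, ∀ r ∈ Sset p, (1/2) * ∑ i, p i ^ 2 ≤ r := by
    rintro p r ⟨g, hg, rfl⟩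
    exact dirichlet_lower h0 h1 hμ hc_meas hc_bdd hΛ p hg
  have hbdd : ∀ p, BddBelow (Sset p) := fun p => ⟨_, fun r hr => hlb p r hr⟩
  have hν_lb : ∀ p, (1/2) * ∑ i, p i ^ 2 ≤ (nubar ρ μ c Λ) p := by
    intro p
    rw [hνinf p]
    exact le_csInf (hne p) (hlb p)
  have hν_nn : ∀ p, 0 ≤ (nubar ρ μ c Λ) p := by
    intro p
    refine le_trans ?_ (hν_lb p)
    positivity
  have hν_ub : ∀ p, (nubar ρ μ c Λ) p ≤ lam / 2 * ∑ i, p i ^ 2 := by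
    intro p
    have h2 : (fun η => affineFn (plusF Λ) p η + (fun _ : Cfg d => (0:ℝ)) η)
        = affineFn (plusF Λ) p := funext fun η => add_zero _
    have h3 := csInf_le (hbdd p) (hmem p _ hdep0)
    rw [h2] at h3
    rw [hνinf p]
    exact le_trans h3 (dirichlet_upper h0 h1 hμ hc_meas hc_bdd hΛ p)
  have hscale_le : ∀ (t : ℝ), t ≠ 0 → ∀ p, (nubar ρ μ c Λ) (t • p) ≤ t^2 * (nubar ρ μ c Λ) p := by
    intro t ht p
    rw [hνinf (t • p), hνinf p]
    have hstep : ∀ r ∈ Sset p, t^2 * r ∈ Sset (t • p) := by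
      rintro r ⟨g, hg, rfl⟩
      refine ⟨fun η => t * g η, hg.outer (fun a => t * a), ?_⟩
      have hfun : (fun η => affineFn (plusF Λ) (t • p) η + t * g η)
          = fun η => t * (affineFn (plusF Λ) p η + g η) := by
        funext η
        rw [affineFn_smul]
        ring
      rw [hfun, dirichlet_scale t (fun η => affineFn (plusF Λ) p η + g η)]
    have ht2 : (0:ℝ) < t^2 := by positivity
    have h2 : sInf (Sset (t • p)) / t^2 ≤ sInf (Sset p) := by
      refine le_csInf (hne p) fun r hr => ?_
      rw [div_le_iff₀ ht2]
      have := csInf_le (hbdd (t • p)) (hstep r hr)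
      linarith
    rw [div_le_iff₀ ht2] at h2
    linarith
  have hdouble : ∀ p, (nubar ρ μ c Λ) ((2:ℝ) • p) = 4 * (nubar ρ μ c Λ) p := by
    intro p
    have h1' := hscale_le 2 two_ne_zero p
    have h2' := hscale_le (2⁻¹ : ℝ) (by norm_num) ((2:ℝ) • p)
    rw [smul_smul, show ((2:ℝ)⁻¹ * 2) = 1 from by norm_num, one_smul] at h2'
    norm_num at h1' h2'
    linarith
  have hpar : ∀ p q, (nubar ρ μ c Λ) (p + q) + (nubar ρ μ c Λ) (p - q) = 2 * (nubar ρ μ c Λ) p + 2 * (nubar ρ μ c Λ) q := by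
    have hle : ∀ p' q' : Fin d → ℝ, (nubar ρ μ c Λ) (p' + q') + (nubar ρ μ c Λ) (p' - q') ≤ 2 * (nubar ρ μ c Λ) p' + 2 * (nubar ρ μ c Λ) q' := by
      intro p' q'
      have key : ∀ r1 ∈ Sset p', ∀ r2 ∈ Sset q',
          (nubar ρ μ c Λ) (p' + q') + (nubar ρ μ c Λ) (p' - q') ≤ 2 * r1 + 2 * r2 := by
        rintro r1 ⟨g1, hg1, rfl⟩ r2 ⟨g2, hg2, rfl⟩
        have hv : DepOn (fun η => affineFn (plusF Λ) p' η + g1 η) (plusF Λ) :=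
          (depOn_affineFn _ _).add (hg1.mono (interiorF_subset.trans subset_plusF))
        have hw : DepOn (fun η => affineFn (plusF Λ) q' η + g2 η) (plusF Λ) :=
          (depOn_affineFn _ _).add (hg2.mono (interiorF_subset.trans subset_plusF))
        have hP := dirichlet_parallelogram hμ hc_meas hc_bdd hv hw
        have hfun1 : (fun η => affineFn (plusF Λ) (p' + q') η + (g1 η + g2 η))
            = fun η => (affineFn (plusF Λ) p' η + g1 η)
              + (affineFn (plusF Λ) q' η + g2 η) := by
          funext η
          rw [affineFn_add]
          ring
        have hfun2 : (fun η => affineFn (plusF Λ) (p' - q') η + (g1 η - g2 η))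
            = fun η => (affineFn (plusF Λ) p' η + g1 η)
              - (affineFn (plusF Λ) q' η + g2 η) := by
          funext η
          rw [affineFn_sub]
          ring
        have hm1 := csInf_le (hbdd (p' + q')) (hmem (p' + q') _ ((hg1.add hg2)))
        have hm2 := csInf_le (hbdd (p' - q')) (hmem (p' - q') _ ((hg1.sub hg2)))
        rw [hfun1] at hm1
        rw [hfun2] at hm2
        rw [hνinf (p' + q'), hνinf (p' - q')]
        linarith
      have step1 : ∀ r2 ∈ Sset q',
          (nubar ρ μ c Λ) (p' + q') + (nubar ρ μ c Λ) (p' - q') ≤ 2 * (nubar ρ μ c Λ) p' + 2 * r2 := by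
        intro r2 hr2
        have h5 : ((nubar ρ μ c Λ) (p' + q') + (nubar ρ μ c Λ) (p' - q') - 2 * r2) / 2 ≤ sInf (Sset p') :=
          le_csInf (hne p') fun r1 hr1 => by linarith [key r1 hr1 r2 hr2]
        rw [← hνinf p'] at h5
        linarith
      have h6 : ((nubar ρ μ c Λ) (p' + q') + (nubar ρ μ c Λ) (p' - q') - 2 * (nubar ρ μ c Λ) p') / 2 ≤ sInf (Sset q') :=
        le_csInf (hne q') fun r2 hr2 => by linarith [step1 r2 hr2]
      rw [← hνinf q'] at h6
      linarith
    intro p q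
    have h1' := hle p q
    have h2' := hle (p + q) (p - q)
    rw [show (p + q) + (p - q) = (2:ℝ) • p from by
        funext i
        simp [Pi.add_apply, Pi.sub_apply, Pi.smul_apply, smul_eq_mul]
        ring,
      show (p + q) - (p - q) = (2:ℝ) • q from by
        funext i
        simp [Pi.add_apply, Pi.sub_apply, Pi.smul_apply, smul_eq_mul]
        ring] at h2'
    rw [hdouble p, hdouble q] at h2'
    linarith
  obtain ⟨B, hBsymm, hBdiag, hBadd, hBsmul⟩ :=
    exists_bilinear (nubar ρ μ c Λ) hpar hν_nn (K := lam / 2) (by linarith) hν_ub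
  have hB0 : ∀ q, B 0 q = 0 := by
    intro q
    have h := hBsmul 0 0 q
    rw [zero_smul, zero_mul] at h
    exact h
  have hBsum : ∀ (m : Finset (Fin d)) (f : Fin d → Fin d → ℝ) (q : Fin d → ℝ),
      B (∑ i ∈ m, f i) q = ∑ i ∈ m, B (f i) q := by
    intro m f q
    induction m using Finset.cons_induction with
    | empty => simpa using hB0 q
    | cons a s ha ih => rw [Finset.sum_cons, Finset.sum_cons, hBadd, ih]
  set e : Fin d → (Fin d → ℝ) := fun i => fun j => if i = j then 1 else 0 with he
  have hrep : ∀ p : Fin d → ℝ, p = ∑ i, p i • e i := fun p => pi_eq_sum_univ p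
  have hexp1 : ∀ (p q : Fin d → ℝ), B p q = ∑ i, p i * B (e i) q := by
    intro p q
    calc B p q = B (∑ i, p i • e i) q := congrArg (fun r => B r q) (hrep p)
      _ = ∑ i, B (p i • e i) q := hBsum Finset.univ _ q
      _ = ∑ i, p i * B (e i) q :=
          Finset.sum_congr rfl fun i _ => hBsmul (p i) (e i) q
  have hBexp : ∀ p : Fin d → ℝ, (nubar ρ μ c Λ) p = ∑ i, ∑ j, p i * p j * B (e i) (e j) := by
    intro p
    rw [hBdiag p, hexp1 p p]
    refine Finset.sum_congr rfl fun i _ => ?_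
    rw [hBsymm (e i) p, hexp1 p (e i), Finset.mul_sum]
    refine Finset.sum_congr rfl fun j _ => ?_
    rw [hBsymm (e j) (e i)]
    ring
  set D : Fin d → Fin d → ℝ := fun i j => 2 * B (e i) (e j) with hD
  have hDid : ∀ p : Fin d → ℝ, (∑ i, p i * ∑ j, D i j * p j) = 2 * (nubar ρ μ c Λ) p := by
    intro p
    calc ∑ i, p i * ∑ j, D i j * p j
        = ∑ i, ∑ j, 2 * (p i * p j * B (e i) (e j)) := by
          refine Finset.sum_congr rfl fun i _ => ?_
          rw [Finset.mul_sum]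
          refine Finset.sum_congr rfl fun j _ => ?_
          rw [hD]
          ring
      _ = 2 * (nubar ρ μ c Λ) p := by
          rw [hBexp p, Finset.mul_sum]
          exact Finset.sum_congr rfl fun i _ => (Finset.mul_sum _ _ _).symm
  refine ⟨D, ?_, ?_, ?_, ?_⟩
  · intro i j
    rw [hD]
    dsimp only
    rw [hBsymm]
  · intro p
    rw [hDid p]
    linarith [hν_lb p]
  · intro p
    rw [hDid p]
    linarith [hν_ub p]
  · intro p
    rw [hDid p]
    linarith [hBdiag p]
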